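/- Let g, m ≥ 1. Let B and M be constant symmetric g×g real matrices, ω a constant g×m real matrix, and γ₀ a constant m×m real matrix. Let I := { ε ∈ ℝ : 1 + ε·B·M is invertible }, an open subset of ℝ. Define on I: B(ε) := (1+εBM)⁻¹·B, ω(ε) := (1+εBM)⁻¹·ω, and γ(ε) := γ₀ − ε·ωᵀ·M·(1+εBM)⁻¹·ω. Then these functions are differentiable on I and for every ε ∈ I: dB(ε)/dε = −B(ε)·M·B(ε), dω(ε)/dε = −B(ε)·M·ω(ε), and dγ(ε)/dε = −ω(ε)ᵀ·M·ω(ε). Moreover B(0) = B, ω(0) = ω, γ(0) = γ₀. -/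

import Mathlib

open Matrix

section Aux

attribute [local instance] Matrix.linftyOpNormedAddCommGroup Matrix.linftyOpNormedSpace
  Matrix.linftyOpNormedRing Matrix.linftyOpNormedAlgebra

/-- Entry evaluation as a continuous linear map on square matrices. -/
noncomputable def entryCLM (g : ℕ) (i j : Fin g) : Matrix (Fin g) (Fin g) ℝ →L[ℝ] ℝ :=
  LinearMap.toContinuousLinearMap
    { toFun := fun X => X i j
      map_add' := fun _ _ => rfl
      map_smul' := fun _ _ => rfl }

/-- Entrywise derivative of `e ↦ (1 + e • (B*M))⁻¹`. -/
lemma inv_entry_hasDerivAt {g : ℕ} (B M : Matrix (Fin g) (Fin g) ℝ) {ε : ℝ}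
    (h : IsUnit (1 + ε • (B * M))) (i j : Fin g) :
    HasDerivAt (fun e : ℝ => (1 + e • (B * M))⁻¹ i j)
      ((-((1 + ε • (B * M))⁻¹ * (B * M) * (1 + ε • (B * M))⁻¹)) i j) ε := by
  have hA : HasDerivAt (fun e : ℝ => 1 + e • (B * M)) (B * M) ε := by
    have := ((hasDerivAt_id ε).smul_const (B * M)).const_add (1 : Matrix (Fin g) (Fin g) ℝ)
    simp only [id_eq, one_smul] at this
    exact this
  have hinv : HasFDerivAt Ring.inverse
      (-(ContinuousLinearMap.mulLeftRight ℝ _ (↑h.unit⁻¹) (↑h.unit⁻¹)))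
      (1 + ε • (B * M)) := by
    have := hasFDerivAt_ringInverse (𝕜 := ℝ) h.unit
    rwa [h.unit_spec] at this
  have hcomp := hinv.comp_hasDerivAt ε hA
  have hru := Ring.inverse_unit h.unit
  rw [h.unit_spec] at hru
  have hcoe : ((↑h.unit⁻¹ : Matrix (Fin g) (Fin g) ℝ)) = (1 + ε • (B * M))⁻¹ := by
    rw [Matrix.nonsing_inv_eq_ringInverse, ← hru]
  have hcomp' : HasDerivAt (fun e : ℝ => (1 + e • (B * M))⁻¹)
      (-((1 + ε • (B * M))⁻¹ * (B * M) * (1 + ε • (B * M))⁻¹)) ε := by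
    simp only [Matrix.nonsing_inv_eq_ringInverse]
    refine hcomp.congr_deriv ?_
    simp [ContinuousLinearMap.mulLeftRight_apply, hcoe, ← Matrix.nonsing_inv_eq_ringInverse,
      mul_assoc]
  have := (entryCLM g i j).hasFDerivAt.comp_hasDerivAt ε hcomp'
  exact this

end Aux

/-- Entrywise derivative of a right multiplication by a constant matrix. -/
lemma mul_const_entry {n p q : ℕ} {f : ℝ → Matrix (Fin n) (Fin p) ℝ}
    {F : Matrix (Fin n) (Fin p) ℝ} (C : Matrix (Fin p) (Fin q) ℝ) {ε : ℝ}
    (h : ∀ i k, HasDerivAt (fun e => f e i k) (F i k) ε) (i : Fin n) (j : Fin q) :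
    HasDerivAt (fun e => (f e * C) i j) ((F * C) i j) ε := by
  simp only [Matrix.mul_apply]
  exact HasDerivAt.fun_sum fun k _ => (h i k).mul_const (C k j)

/-- Entrywise derivative of a left multiplication by a constant matrix. -/
lemma const_mul_entry {n p q : ℕ} {f : ℝ → Matrix (Fin p) (Fin q) ℝ}
    {F : Matrix (Fin p) (Fin q) ℝ} (C : Matrix (Fin n) (Fin p) ℝ) {ε : ℝ}
    (h : ∀ k j, HasDerivAt (fun e => f e k j) (F k j) ε) (i : Fin n) (j : Fin q) :
    HasDerivAt (fun e => (C * f e) i j) ((C * F) i j) ε := by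
  simp only [Matrix.mul_apply]
  exact HasDerivAt.fun_sum fun k _ => (h k j).const_mul (C i k)

set_option maxHeartbeats 1600000 in
/-- The key matrix identity for the γ equation. -/
lemma key_identity {g m : ℕ} (B M : Matrix (Fin g) (Fin g) ℝ) (hB : Bᵀ = B) (hM : Mᵀ = M)
    (ω : Matrix (Fin g) (Fin m) ℝ) {ε : ℝ} (h : IsUnit (1 + ε • (B * M))) :
    ωᵀ * M * (1 + ε • (B * M))⁻¹ * ω
      + ε • (ωᵀ * M * -((1 + ε • (B * M))⁻¹ * (B * M) * (1 + ε • (B * M))⁻¹) * ω)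
      = ((1 + ε • (B * M))⁻¹ * ω)ᵀ * M * ((1 + ε • (B * M))⁻¹ * ω) := by
  set A : Matrix (Fin g) (Fin g) ℝ := 1 + ε • (B * M) with hAdef
  set N : Matrix (Fin g) (Fin g) ℝ := A⁻¹ with hNdef
  have hdet : IsUnit A.det := (Matrix.isUnit_iff_isUnit_det A).mp h
  have h1 : A * N = 1 := Matrix.mul_nonsing_inv A hdet
  have h1' : N + ε • (B * M * N) = 1 := by
    rw [← h1, hAdef, Matrix.add_mul, Matrix.one_mul, Matrix.smul_mul]
  have hs1 : (1 : Matrix (Fin g) (Fin g) ℝ) - ε • (B * M * N) = N := by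
    rw [← h1']; abel
  have hAT : Aᵀ = 1 + ε • (M * B) := by
    rw [hAdef]
    simp [Matrix.transpose_add, Matrix.transpose_smul, Matrix.transpose_mul, hB, hM]
  have hdetT : IsUnit Aᵀ.det := by rwa [Matrix.det_transpose]
  have hs3 : M * A = Aᵀ * M := by
    rw [hAdef, hAT]
    simp only [Matrix.mul_add, Matrix.add_mul, Matrix.mul_one, Matrix.one_mul,
      Matrix.mul_smul, Matrix.smul_mul, Matrix.mul_assoc]
  have hs4 : Nᵀ * M = M * N := by
    have e1 : Aᵀ⁻¹ * (M * A) * N = Aᵀ⁻¹ * (Aᵀ * M) * N := by rw [hs3]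
    have e2 : Aᵀ⁻¹ * (Aᵀ * M) * N = M * N := by
      rw [← Matrix.mul_assoc, Matrix.nonsing_inv_mul Aᵀ hdetT, Matrix.one_mul]
    have e3 : Aᵀ⁻¹ * (M * A) * N = Aᵀ⁻¹ * M := by
      rw [Matrix.mul_assoc, Matrix.mul_assoc, h1, Matrix.mul_one]
    rw [hNdef, Matrix.transpose_nonsing_inv, ← e2, e1.symm.trans e3]
  have hNN : N - ε • (N * (B * M * N)) = N * N := by
    calc N - ε • (N * (B * M * N))
        = N * (1 - ε • (B * M * N)) := by
          rw [Matrix.mul_sub, Matrix.mul_one, Matrix.mul_smul]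
      _ = N * N := by rw [hs1]
  calc ωᵀ * M * N * ω + ε • (ωᵀ * M * -(N * (B * M) * N) * ω)
      = ωᵀ * (M * (N - ε • (N * (B * M * N)))) * ω := by
        simp only [Matrix.mul_sub, Matrix.sub_mul, Matrix.mul_smul, Matrix.smul_mul,
          Matrix.mul_neg, Matrix.neg_mul, smul_neg, neg_smul, Matrix.mul_assoc]
        abel
    _ = ωᵀ * (M * (N * N)) * ω := by rw [hNN]
    _ = (N * ω)ᵀ * M * (N * ω) := by
        rw [Matrix.transpose_mul, Matrix.mul_assoc ωᵀ Nᵀ M, hs4]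
        simp only [Matrix.mul_assoc]

/-- Explicit integration of the constant special Givental–van de Leur vector field:
`B(ε) = (1+εBM)⁻¹B`, `ω(ε) = (1+εBM)⁻¹ω`, `γ(ε) = γ₀ − ε ωᵀ M (1+εBM)⁻¹ ω` solve the ODE
system `dB/dε = −BMB`, `dω/dε = −BMω`, `dγ/dε = −ωᵀMω` with the given initial values, on
the open set where `1+εBM` is invertible. -/
theorem explicit_integration_special_deformation
    {g m : ℕ} (hg : 1 ≤ g) (hm : 1 ≤ m)
    (B M : Matrix (Fin g) (Fin g) ℝ) (hB : Bᵀ = B) (hM : Mᵀ = M)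
    (ω : Matrix (Fin g) (Fin m) ℝ) (γ₀ : Matrix (Fin m) (Fin m) ℝ) :
    IsOpen {ε : ℝ | IsUnit (1 + ε • (B * M))} ∧
    (∀ ε ∈ {ε : ℝ | IsUnit (1 + ε • (B * M))}, ∀ i j : Fin g,
      HasDerivAt (fun e : ℝ => ((1 + e • (B * M))⁻¹ * B) i j)
        ((-(((1 + ε • (B * M))⁻¹ * B) * M * ((1 + ε • (B * M))⁻¹ * B))) i j) ε) ∧
    (∀ ε ∈ {ε : ℝ | IsUnit (1 + ε • (B * M))}, ∀ (i : Fin g) (j : Fin m),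
      HasDerivAt (fun e : ℝ => ((1 + e • (B * M))⁻¹ * ω) i j)
        ((-(((1 + ε • (B * M))⁻¹ * B) * M * ((1 + ε • (B * M))⁻¹ * ω))) i j) ε) ∧
    (∀ ε ∈ {ε : ℝ | IsUnit (1 + ε • (B * M))}, ∀ i j : Fin m,
      HasDerivAt (fun e : ℝ => (γ₀ - e • (ωᵀ * M * (1 + e • (B * M))⁻¹ * ω)) i j)
        ((-(((1 + ε • (B * M))⁻¹ * ω)ᵀ * M * ((1 + ε • (B * M))⁻¹ * ω))) i j) ε) ∧
    ((1 + (0 : ℝ) • (B * M))⁻¹ * B = B) ∧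
    ((1 + (0 : ℝ) • (B * M))⁻¹ * ω = ω) ∧
    (γ₀ - (0 : ℝ) • (ωᵀ * M * (1 + (0 : ℝ) • (B * M))⁻¹ * ω) = γ₀) := by
  refine ⟨?_, ?_, ?_, ?_, ?_, ?_, ?_⟩
  · -- openness
    have hset : {ε : ℝ | IsUnit (1 + ε • (B * M))}
        = (fun ε : ℝ => (1 + ε • (B * M)).det) ⁻¹' ({0}ᶜ) := by
      ext ε
      simp [Matrix.isUnit_iff_isUnit_det, isUnit_iff_ne_zero]
    rw [hset]
    exact isOpen_compl_singleton.preimage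
      (Continuous.matrix_det (by continuity))
  · -- B equation
    intro ε hε i j
    have hD := inv_entry_hasDerivAt B M hε
    have := mul_const_entry B hD i j
    have heq : (-((1 + ε • (B * M))⁻¹ * (B * M) * (1 + ε • (B * M))⁻¹)) * B
        = -(((1 + ε • (B * M))⁻¹ * B) * M * ((1 + ε • (B * M))⁻¹ * B)) := by
      simp only [Matrix.neg_mul, Matrix.mul_assoc]
    rwa [heq] at this
  · -- ω equation
    intro ε hε i j
    have hD := inv_entry_hasDerivAt B M hε
    have := mul_const_entry ω hD i j
    have heq : (-((1 + ε • (B * M))⁻¹ * (B * M) * (1 + ε • (B * M))⁻¹)) * ω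
        = -(((1 + ε • (B * M))⁻¹ * B) * M * ((1 + ε • (B * M))⁻¹ * ω)) := by
      simp only [Matrix.neg_mul, Matrix.mul_assoc]
    rwa [heq] at this
  · -- γ equation
    intro ε hε i j
    have hD := inv_entry_hasDerivAt B M hε
    have h2 := fun i j => const_mul_entry (ωᵀ * M) hD i j
    have h3 := fun i j => mul_const_entry ω h2 i j
    have h4 := ((hasDerivAt_id ε).mul (h3 i j)).const_sub (γ₀ i j)
    have hkey := key_identity B M hB hM ω hε
    have hfun : (fun e : ℝ => (γ₀ - e • (ωᵀ * M * (1 + e • (B * M))⁻¹ * ω)) i j)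
        = fun e : ℝ => γ₀ i j - e * ((ωᵀ * M * (1 + e • (B * M))⁻¹ * ω) i j) := by
      funext e
      simp only [Matrix.sub_apply, Matrix.smul_apply, smul_eq_mul]
    rw [hfun]
    have hval : -(1 * ((ωᵀ * M * (1 + ε • (B * M))⁻¹ * ω) i j) +
        id ε * ((ωᵀ * M * -((1 + ε • (B * M))⁻¹ * (B * M) * (1 + ε • (B * M))⁻¹) * ω) i j))
        = (-(((1 + ε • (B * M))⁻¹ * ω)ᵀ * M * ((1 + ε • (B * M))⁻¹ * ω))) i j := by
      rw [Matrix.neg_apply]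
      congr 1
      rw [one_mul, id_eq, ← hkey, Matrix.add_apply, Matrix.smul_apply, smul_eq_mul]
    exact hval ▸ h4
  · rw [zero_smul, add_zero, inv_one, Matrix.one_mul]
  · rw [zero_smul, add_zero, inv_one, Matrix.one_mul]
  · rw [zero_smul, sub_zero]
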